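/- Let G be a locally compact group, X and Ξ G-spaces with G-invariant measures, Y a separable Hilbert space with a unitary representation μ : G → U(Y), and φ : X × Ξ → Y a joint-G-equivariant feature map. Define the joint-equivariant machine S_φ[γ](x) := ∫_Ξ γ(ξ) φ(x,ξ) dξ (Bochner integral) for γ : Ξ → ℂ, the representation π_g[f](x) := μ_g(f(g⁻¹·x)) on L²(X;Y), and the representation π̂_g[γ](ξ) := γ(g⁻¹·ξ) on L²(Ξ). Then S_φ intertwines π̂ and π: for every g ∈ G and γ for which the integrals are defined, S_φ[π̂_g[γ]] = π_g[S_φ[γ]]. -/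

import Mathlib

open MeasureTheory

/-- Let `G` be a locally compact group, `X` and `Ξ` `G`-spaces with
`G`-invariant measures, `Y` a separable Hilbert space with a unitary representation
`ρ : G → U(Y)`, and `φ : X × Ξ → Y` a joint-`G`-equivariant feature map.  The
joint-equivariant machine `S_φ[γ](x) := ∫_Ξ γ(ξ) • φ(x,ξ) dξ` intertwines
`π̂_g[γ](ξ) = γ(g⁻¹ • ξ)` and `π_g[f](x) = ρ_g (f (g⁻¹ • x))`:
`S_φ[π̂_g γ] = π_g[S_φ γ]`. -/
theorem statement4
    {G X Ξ Y : Type*} [Group G] [TopologicalSpace G] [IsTopologicalGroup G]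
    [LocallyCompactSpace G]
    [MeasurableSpace X] [MulAction G X]
    [MeasurableSpace Ξ] [MulAction G Ξ]
    (μX : Measure X) (μΞ : Measure Ξ)
    (hμX : ∀ g : G, MeasurePreserving (fun x : X => g • x) μX μX)
    (hμΞ : ∀ g : G, MeasurePreserving (fun ξ : Ξ => g • ξ) μΞ μΞ)
    [NormedAddCommGroup Y] [InnerProductSpace ℂ Y] [CompleteSpace Y]
    [TopologicalSpace.SeparableSpace Y]
    (ρ : G →* (Y ≃ₗᵢ[ℂ] Y))
    (φ : X → Ξ → Y)
    (hφ : ∀ (g : G) (x : X) (ξ : Ξ), φ (g • x) (g • ξ) = ρ g (φ x ξ))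
    (S : (Ξ → ℂ) → X → Y)
    (hS : ∀ (γ : Ξ → ℂ) (x : X), S γ x = ∫ ξ, γ ξ • φ x ξ ∂μΞ)
    (g : G) (γ : Ξ → ℂ)
    (hint : ∀ x : X, Integrable (fun ξ => γ ξ • φ x ξ) μΞ) :
    ∀ x : X, S (fun ξ => γ (g⁻¹ • ξ)) x = ρ g (S γ (g⁻¹ • x)) := by
  intro x
  -- measurable equivalence given by the action of g
  let e : Ξ ≃ᵐ Ξ :=
    { toFun := fun ξ => g • ξ
      invFun := fun ξ => g⁻¹ • ξ
      left_inv := fun ξ => inv_smul_smul g ξ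
      right_inv := fun ξ => smul_inv_smul g ξ
      measurable_toFun := (hμΞ g).measurable
      measurable_invFun := (hμΞ g⁻¹).measurable }
  have key : ∀ ξ : Ξ, φ x (g • ξ) = ρ g (φ (g⁻¹ • x) ξ) := by
    intro ξ
    have := hφ g (g⁻¹ • x) ξ
    rwa [smul_inv_smul] at this
  rw [hS, hS]
  calc
    ∫ ξ, γ (g⁻¹ • ξ) • φ x ξ ∂μΞ
        = ∫ ξ, γ (g⁻¹ • (g • ξ)) • φ x (g • ξ) ∂μΞ := by
          rw [← MeasurePreserving.integral_comp (hμΞ g) e.measurableEmbedding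
            (fun ξ => γ (g⁻¹ • ξ) • φ x ξ)]
    _ = ∫ ξ, ρ g (γ ξ • φ (g⁻¹ • x) ξ) ∂μΞ := by
          congr 1; funext ξ
          rw [inv_smul_smul, key ξ, LinearIsometryEquiv.map_smul]
    _ = ρ g (∫ ξ, γ ξ • φ (g⁻¹ • x) ξ ∂μΞ) := by
          simpa using (((ρ g).toLinearIsometry.toContinuousLinearMap.integral_comp_comm
            (hint (g⁻¹ • x))))
  done
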